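/- Let n, r be natural numbers with r ≥ 1, and let l : Fin r → ℕ with each l_j ≥ 1 and l_1 + ⋯ + l_r < n. Let R be a commutative ℚ-algebra, let ħ ∈ R be a unit, and let P ∈ R satisfy P^{n+1} = 0 (so that every element P + m·ħ with m ≥ 1 is a unit, being a unit plus a nilpotent). Define Γ(d) = (∏_{j=1}^{r} ∏_{m=0}^{d·l_j}(l_j·P + m·ħ)) · ((∏_{m=1}^{d}(P + m·ħ))⁻¹)^{n+1} ∈ R and the formal power series F = Σ_{d≥0} Γ(d)·X^d ∈ R[[X]]. Let D : R[[X]] → R[[X]] be the operator D(f) = P·f + ħ·X·f′, where f′ denotes the formal derivative. Then D^{n+1-r}(F) = (∏_{j=1}^{r} l_j) · X · ((∏_{j=1}^{r} ∏_{m=1}^{l_j-1} (l_j·D + (m·ħ)·id)) F), where the product of operators denotes composition (in any order; all these operators commute). -/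

import Mathlib

open Finset PowerSeries

/-- Givental's theorem: for a complete intersection of multidegree `(l 1, …, l r)` in `ℙⁿ`
with `∑ l j < n`, the hypergeometric series `F = Σ Γ(d) Xᵈ` satisfies the Picard–Fuchs
equation written in the variable `q = eᵗ`, where `hbar d/dt` becomes `D = P + hbar·q·d/dq`. -/
theorem givental_picard_fuchs_small_degree
    (n r : ℕ) (hr : 1 ≤ r) (l : Fin r → ℕ) (hl : ∀ j, 1 ≤ l j)
    (hsum : ∑ j, l j < n)
    (R : Type*) [CommRing R] [Algebra ℚ R] (hbar : R) (hu : IsUnit hbar)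
    (P : R) (hP : P ^ (n + 1) = 0)
    (Γ : ℕ → R)
    (hΓ : ∀ d : ℕ, Γ d =
      (∏ j : Fin r, ∏ m ∈ Finset.range (d * l j + 1), ((l j : R) * P + (m : R) * hbar)) *
        (Ring.inverse (∏ m ∈ Finset.Icc 1 d, (P + (m : R) * hbar))) ^ (n + 1))
    (F : PowerSeries R) (hF : F = PowerSeries.mk Γ)
    (D : Module.End R (PowerSeries R))
    (hD : ∀ f : PowerSeries R,
      D f = PowerSeries.C P * f + PowerSeries.C hbar * (PowerSeries.X * f.derivativeFun)) :
    (D ^ (n + 1 - r)) F =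
      PowerSeries.C (∏ j : Fin r, (l j : R)) * PowerSeries.X *
        ((Polynomial.aeval D
            (∏ j : Fin r, ∏ m ∈ Finset.Icc 1 (l j - 1),
              (Polynomial.C (l j : R) * Polynomial.X + Polynomial.C ((m : R) * hbar)))) F) := by
  have hPnil : IsNilpotent P := ⟨n + 1, hP⟩
  -- arithmetic: r ≤ n
  have hrn : n + 1 - r + r = n + 1 := by
    have h1 : r ≤ ∑ j, l j := by
      calc r = ∑ _j : Fin r, 1 := by simp
        _ ≤ ∑ j, l j := Finset.sum_le_sum fun j _ => hl j
    omega
  -- each coefficient of D f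
  have coeffD : ∀ (d : ℕ) (f : PowerSeries R),
      coeff d (D f) = (P + (d : R) * hbar) * coeff d f := by
    intro d f
    rw [hD, map_add, coeff_C_mul, coeff_C_mul]
    cases d with
    | zero =>
      have h0 : coeff 0 (X * f.derivativeFun) = 0 := by
        simp [coeff_zero_eq_constantCoeff_apply, map_mul]
      rw [h0]
      push_cast
      ring
    | succ e =>
      rw [coeff_succ_X_mul, show f.derivativeFun = derivative R f from rfl, coeff_derivativeFun]
      push_cast
      ring
  -- coefficients of aeval D p f
  have coeffAeval : ∀ (p : Polynomial R) (d : ℕ) (f : PowerSeries R),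
      coeff d (Polynomial.aeval D p f) = p.eval (P + (d : R) * hbar) * coeff d f := by
    intro p
    induction p using Polynomial.induction_on with
    | C a =>
      intro d f
      simp [Module.algebraMap_end_apply]
    | add p q hp hq =>
      intro d f
      simp only [map_add, LinearMap.add_apply, Polynomial.eval_add]
      rw [hp, hq]
      ring
    | monomial k a ih =>
      intro d f
      have hm : Polynomial.C a * Polynomial.X ^ (k + 1) =
          Polynomial.C a * Polynomial.X ^ k * Polynomial.X := by ring
      rw [hm, map_mul, Polynomial.aeval_X, Module.End.mul_apply, ih, coeffD]
      simp only [Polynomial.eval_mul, Polynomial.eval_pow, Polynomial.eval_C, Polynomial.eval_X]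
      ring
  have coeffPow : ∀ (k d : ℕ) (f : PowerSeries R),
      coeff d ((D ^ k) f) = (P + (d : R) * hbar) ^ k * coeff d f := by
    intro k d f
    have h := coeffAeval (Polynomial.X ^ k) d f
    rw [map_pow, Polynomial.aeval_X] at h
    simpa using h
  ext d
  rw [coeffPow, hF, coeff_mk, mul_assoc, coeff_C_mul]
  cases d with
  | zero =>
    have h0 : ∀ G : PowerSeries R, coeff 0 (X * G) = 0 := by
      intro G
      simp [coeff_zero_eq_constantCoeff_apply, map_mul]
    rw [h0, mul_zero]
    have hΓ0 : Γ 0 = (∏ j : Fin r, (l j : R)) * P ^ r := by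
      rw [hΓ 0]
      simp [Finset.prod_mul_distrib]
    rw [hΓ0]
    push_cast
    rw [zero_mul, add_zero]
    calc P ^ (n + 1 - r) * ((∏ j : Fin r, (l j : R)) * P ^ r)
        = (∏ j : Fin r, (l j : R)) * (P ^ (n + 1 - r) * P ^ r) := by ring
      _ = 0 := by rw [← pow_add, hrn, hP, mul_zero]
  | succ e =>
    rw [coeff_succ_X_mul, coeffAeval, coeff_mk]
    set v : R := P + ((e : R) + 1) * hbar with hvdef
    have hv : IsUnit v := by
      have h1 : IsUnit (((e : R) + 1) * hbar) := by
        have : ((e : R) + 1) = algebraMap ℚ R ((e : ℚ) + 1) := by push_cast; ring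
        refine IsUnit.mul ?_ hu
        rw [this]
        exact (isUnit_iff_ne_zero.mpr (by positivity)).map _
      exact hPnil.isUnit_add_right_of_commute h1 (Commute.all _ _)
    -- evaluate the polynomial
    rw [Polynomial.eval_prod]
    simp only [Polynomial.eval_prod, Polynomial.eval_add, Polynomial.eval_mul,
      Polynomial.eval_C, Polynomial.eval_X]
    -- split the numerator products
    have hsplit : ∀ j : Fin r,
        (∏ m ∈ Finset.range ((e + 1) * l j + 1), ((l j : R) * P + (m : R) * hbar)) =
        (∏ m ∈ Finset.range (e * l j + 1), ((l j : R) * P + (m : R) * hbar)) *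
          ((∏ i ∈ Finset.range (l j - 1),
              ((l j : R) * P + ((e * l j + 1 + i : ℕ) : R) * hbar)) * ((l j : R) * v)) := by
      intro j
      have hL := hl j
      rw [Nat.succ_mul]
      rw [Finset.range_eq_Ico,
        ← Finset.prod_Ico_consecutive _ (Nat.zero_le (e * l j + 1)) (by omega),
        ← Finset.range_eq_Ico, Finset.prod_Ico_eq_prod_range]
      congr 1
      have h2 : e * l j + l j + 1 - (e * l j + 1) = l j := by omega
      rw [h2]
      rw [show Finset.range (l j) = Finset.range ((l j - 1) + 1) from by
        rw [Nat.sub_add_cancel hL], Finset.prod_range_succ]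
      congr 1
      have h3 : e * l j + 1 + (l j - 1) = e * l j + l j := by omega
      rw [h3, hvdef]
      push_cast
      ring
    have hB : ∀ j : Fin r,
        (∏ i ∈ Finset.range (l j - 1),
            ((l j : R) * P + ((e * l j + 1 + i : ℕ) : R) * hbar)) =
        ∏ m ∈ Finset.Icc 1 (l j - 1), ((l j : R) * (P + (e : R) * hbar) + (m : R) * hbar) := by
      intro j
      rw [show Finset.Icc 1 (l j - 1) = Finset.Ico 1 (l j - 1 + 1) from
        (Finset.Ico_add_one_right_eq_Icc 1 (l j - 1)).symm, Finset.prod_Ico_eq_prod_range]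
      rw [show l j - 1 + 1 - 1 = l j - 1 from by omega]
      apply Finset.prod_congr rfl
      intro i _
      push_cast
      ring
    -- the denominator
    have hIcc : (∏ m ∈ Finset.Icc 1 (e + 1), (P + (m : R) * hbar)) =
        (∏ m ∈ Finset.Icc 1 e, (P + (m : R) * hbar)) * v := by
      rw [Finset.prod_Icc_succ_top (by omega)]
      congr 1
      rw [hvdef]
      push_cast
      ring
    have hv1 : v ^ (n + 1 - r) * v ^ r * (Ring.inverse v) ^ (n + 1) = 1 := by
      rw [← pow_add, hrn, ← mul_pow, Ring.mul_inverse_cancel v hv, one_pow]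
    have hcast : (P + ((e + 1 : ℕ) : R) * hbar) = v := by rw [hvdef]; push_cast; ring
    rw [hcast]
    calc v ^ (n + 1 - r) * Γ (e + 1)
        = (v ^ (n + 1 - r) * v ^ r * (Ring.inverse v) ^ (n + 1)) *
          ((∏ j : Fin r, (l j : R)) *
            (∏ j : Fin r, ∏ m ∈ Finset.Icc 1 (l j - 1),
              ((l j : R) * (P + (e : R) * hbar) + (m : R) * hbar)) *
            ((∏ j : Fin r, ∏ m ∈ Finset.range (e * l j + 1),
                ((l j : R) * P + (m : R) * hbar)) *
              (Ring.inverse (∏ m ∈ Finset.Icc 1 e, (P + (m : R) * hbar))) ^ (n + 1))) := by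
          rw [hΓ (e + 1), Finset.prod_congr rfl (fun j _ => hsplit j),
            Finset.prod_mul_distrib, Finset.prod_mul_distrib,
            Finset.prod_congr rfl (fun j _ => hB j),
            Finset.prod_mul_distrib, Finset.prod_const, Finset.card_univ, Fintype.card_fin,
            hIcc, Ring.mul_inverse_rev, mul_pow]
          ring
      _ = (∏ j : Fin r, (l j : R)) *
            ((∏ j : Fin r, ∏ m ∈ Finset.Icc 1 (l j - 1),
              ((l j : R) * (P + (e : R) * hbar) + (m : R) * hbar)) * Γ e) := by
          rw [hv1, hΓ e]
          ring
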